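/- Let p, q be functions on the naturals with p(x), q(x) ≥ 10x for x ≥ 1, define ε(x) = 2^{-q(x)} and f(x) = 10·ln(2)·2^{2q(x)}·p(x). Then for all sufficiently large x: 10 · f(x)² · 2^{p(x)} · x · (1 - ε(x))^{f(x)} < 1. -/

import Mathlib

/-- Nat-side inequality. -/
lemma fo3_nat_bound (P Q x : ℕ) (hP : 10 ≤ P) (hQ : 10 ≤ Q) (hxP : x ≤ P) :
    640 * 2 ^ (4 * Q) * P ^ 2 * 2 ^ P * x < 2 ^ (10 * 2 ^ Q * P) := by
  have h1 : 640 * 2 ^ (4 * Q) * P ^ 2 * 2 ^ P * x ≤ 2 ^ (10 + 4 * Q + 4 * P) := by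
    have hP2 : P ^ 2 ≤ 2 ^ (2 * P) := by
      have := Nat.lt_two_pow_self (n := P)
      calc P ^ 2 ≤ (2 ^ P) ^ 2 := Nat.pow_le_pow_left this.le 2
        _ = 2 ^ (2 * P) := by rw [← pow_mul, mul_comm]
    have hx2 : x ≤ 2 ^ P := le_trans hxP (Nat.lt_two_pow_self (n := P)).le
    calc 640 * 2 ^ (4 * Q) * P ^ 2 * 2 ^ P * x
        ≤ 2 ^ 10 * 2 ^ (4 * Q) * 2 ^ (2 * P) * 2 ^ P * 2 ^ P := by
          apply Nat.mul_le_mul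
          apply Nat.mul_le_mul
          apply Nat.mul_le_mul
          apply Nat.mul_le_mul (by norm_num) le_rfl
          exact hP2
          exact le_rfl
          exact hx2
      _ = 2 ^ (10 + 4 * Q + 4 * P) := by ring
  have h2 : 10 + 4 * Q + 4 * P < 10 * 2 ^ Q * P := by
    have hQ2 : Q < 2 ^ Q := Nat.lt_two_pow_self (n := Q)
    have h1024 : 1024 ≤ 2 ^ Q := by
      calc (1024 : ℕ) = 2 ^ 10 := by norm_num
        _ ≤ 2 ^ Q := Nat.pow_le_pow_right (by norm_num) hQ
    nlinarith
  calc 640 * 2 ^ (4 * Q) * P ^ 2 * 2 ^ P * x ≤ 2 ^ (10 + 4 * Q + 4 * P) := h1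
    _ < 2 ^ (10 * 2 ^ Q * P) := Nat.pow_lt_pow_right (by norm_num) h2

/-- Quantitative claim for the exponential model-size bound for FO³₋: with `p, q ≥ 10x`,
`ε x = 2^{-q(x)}` and `f x = 10 · ln 2 · 2^{2q(x)} · p(x)`, for all sufficiently large `x`,
`10 · f(x)² · 2^{p(x)} · x · (1-ε(x))^{f(x)} < 1`. -/
theorem fo3_model_size_bound (p q : ℕ → ℕ)
    (hp : ∀ x : ℕ, 1 ≤ x → 10 * x ≤ p x) (hq : ∀ x : ℕ, 1 ≤ x → 10 * x ≤ q x)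
    (ε f : ℕ → ℝ)
    (hε : ∀ x : ℕ, ε x = (2 : ℝ) ^ (-(q x : ℝ)))
    (hf : ∀ x : ℕ, f x = 10 * Real.log 2 * (2 : ℝ) ^ (2 * q x) * (p x : ℝ)) :
    ∃ N : ℕ, ∀ x : ℕ, N ≤ x →
      10 * (f x) ^ 2 * (2 : ℝ) ^ (p x) * (x : ℝ) * (1 - ε x) ^ (f x) < 1 := by
  refine ⟨1, fun x hx => ?_⟩
  have hpx := hp x hx
  have hqx := hq x hx
  have hP : 10 ≤ p x := by omega
  have hQ : 10 ≤ q x := by omega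
  have hxP : x ≤ p x := by omega
  set P := p x with hPdef
  set Q := q x with hQdef
  -- ε as an inverse power
  have hεeq : ε x = ((2 : ℝ) ^ Q)⁻¹ := by
    rw [hε, ← Real.rpow_natCast 2 Q, ← Real.rpow_neg (by norm_num)]
  have hε0 : 0 < ε x := by rw [hεeq]; positivity
  have hε1 : ε x < 1 := by
    rw [hεeq]
    rw [inv_lt_one_iff₀]
    right
    have : (1:ℝ) < 2 := one_lt_two
    exact one_lt_pow₀ this (by omega)
  have h1ε : 0 < 1 - ε x := by linarith
  have hf0 : 0 ≤ f x := by
    rw [hf]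
    have := Real.log_nonneg (by norm_num : (1:ℝ) ≤ 2)
    positivity
  -- bound the rpow term
  have hlog : Real.log (1 - ε x) ≤ -(ε x) := by
    have := Real.log_le_sub_one_of_pos h1ε
    linarith
  set M : ℕ := 10 * 2 ^ Q * P with hM
  have hfε : f x * ε x = Real.log 2 * (M : ℝ) := by
    rw [hf, hεeq, hM]
    push_cast
    rw [two_mul, pow_add]
    field_simp
    ring
  have hB : (1 - ε x) ^ (f x) ≤ ((2 : ℝ) ^ M)⁻¹ := by
    rw [Real.rpow_def_of_pos h1ε]
    have h1 : f x * Real.log (1 - ε x) ≤ -(Real.log 2 * M) := by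
      have := mul_le_mul_of_nonneg_left hlog hf0
      rw [mul_neg] at this
      rw [← hfε]
      linarith
    calc Real.exp (Real.log (1 - ε x) * f x) ≤ Real.exp (-(Real.log 2 * M)) := by
          apply Real.exp_le_exp.mpr
          rw [mul_comm]
          exact h1
      _ = ((2 : ℝ) ^ M)⁻¹ := by
          rw [Real.exp_neg, mul_comm, Real.exp_nat_mul, Real.exp_log (by norm_num)]
  -- bound the front factor
  have hfbound : f x ≤ 8 * (2 : ℝ) ^ (2 * Q) * P := by
    rw [hf, ← hPdef, ← hQdef]
    have hl : Real.log 2 ≤ 0.7 := by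
      have := Real.log_two_lt_d9
      linarith
    have h2q : (0:ℝ) ≤ (2 : ℝ) ^ (2 * Q) := by positivity
    have hp0 : (0:ℝ) ≤ (P : ℝ) := by positivity
    nlinarith [mul_le_mul_of_nonneg_right (show 10 * Real.log 2 ≤ 8 by linarith)
      (mul_nonneg h2q hp0)]
  have hA : 10 * (f x) ^ 2 * (2 : ℝ) ^ P * (x : ℝ) < (2 : ℝ) ^ M := by
    have key : 10 * (f x) ^ 2 * (2 : ℝ) ^ P * (x : ℝ)
        ≤ ((640 * 2 ^ (4 * Q) * P ^ 2 * 2 ^ P * x : ℕ) : ℝ) := by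
      push_cast
      have hsq : (f x) ^ 2 ≤ (8 * (2 : ℝ) ^ (2 * Q) * P) ^ 2 := by
        apply pow_le_pow_left₀ hf0 hfbound
      have hexp : ((8:ℝ) * (2 : ℝ) ^ (2 * Q) * P) ^ 2 = 64 * (2:ℝ) ^ (4 * Q) * P ^ 2 := by
        rw [mul_pow, mul_pow, ← pow_mul, show 2 * Q * 2 = 4 * Q by ring]
        norm_num
      have h1 : (f x) ^ 2 ≤ 64 * (2:ℝ) ^ (4 * Q) * P ^ 2 := hexp ▸ hsq
      nlinarith [mul_le_mul_of_nonneg_right h1 (by positivity : (0:ℝ) ≤ (2:ℝ) ^ P * x)]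
    have key2 : ((640 * 2 ^ (4 * Q) * P ^ 2 * 2 ^ P * x : ℕ) : ℝ) < ((2 ^ M : ℕ) : ℝ) := by
      exact_mod_cast fo3_nat_bound P Q x hP hQ hxP
    push_cast at key key2
    linarith
  have hA0 : 0 ≤ 10 * (f x) ^ 2 * (2 : ℝ) ^ P * (x : ℝ) := by positivity
  calc 10 * (f x) ^ 2 * (2 : ℝ) ^ P * (x : ℝ) * (1 - ε x) ^ (f x)
      ≤ 10 * (f x) ^ 2 * (2 : ℝ) ^ P * (x : ℝ) * ((2 : ℝ) ^ M)⁻¹ :=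
        mul_le_mul_of_nonneg_left hB hA0
    _ < (2 : ℝ) ^ M * ((2 : ℝ) ^ M)⁻¹ := by
        apply mul_lt_mul_of_pos_right hA
        positivity
    _ = 1 := by
        rw [mul_inv_cancel₀]
        positivity
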